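/- arXiv:1705.09566 — 2 statements merged into one kernel-verified Lean document; each statement's English description precedes it below -/
import Mathlib

section
/- Fix natural numbers N ≥ 1 and m ≥ 1. Consider i.i.d. random values k₁, …, k_N, each uniformly distributed on Fin m (the product of N copies of the uniform probability mass function on Fin m). For an index i, let Uᵢ be the event that kᵢ < k_l for every l ≠ i (i is the unique minimizer). Then for every index i, (1 − N²/(2m))/N ≤ P(Uᵢ) ≤ 1/N. -/
open MeasureTheory Finset

section aux

variable {N m : ℕ} [NeZero N] [NeZero m]

open Classical in
omit [NeZero N] [NeZero m] in
lemma card_eq_coords_le (a b : Fin N) (hab : a ≠ b) :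
    (univ.filter (fun k : Fin N → Fin m => k a = k b)).card ≤ m ^ (N - 1) := by
  classical
  have hsub : Fintype.card {l : Fin N // l ≠ b} = N - 1 := by
    have h1 := Fintype.card_subtype_compl (fun l : Fin N => l = b)
    simpa [Fintype.card_subtype_eq] using h1
  have hcard : Fintype.card ({l : Fin N // l ≠ b} → Fin m) = m ^ (N - 1) := by
    rw [Fintype.card_fun, hsub, Fintype.card_fin]
  calc (univ.filter (fun k : Fin N → Fin m => k a = k b)).card
      ≤ (univ : Finset ({l : Fin N // l ≠ b} → Fin m)).card := by
        apply Finset.card_le_card_of_injOn (fun k => fun l => k l.1)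
        · intro k _; exact mem_univ _
        · intro k hk k' hk' h
          simp only [mem_coe, mem_filter] at hk hk'
          funext l
          by_cases hl : l = b
          · subst hl
            rw [← hk.2, ← hk'.2]
            exact congrFun h ⟨a, hab⟩
          · exact congrFun h ⟨l, hl⟩
    _ = m ^ (N - 1) := by rw [card_univ, hcard]

open Classical in
omit [NeZero N] [NeZero m] in
lemma card_umin_eq (i j : Fin N) :
    (univ.filter (fun k : Fin N → Fin m => ∀ l, l ≠ j → k j < k l)).card
      = (univ.filter (fun k : Fin N → Fin m => ∀ l, l ≠ i → k i < k l)).card := by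
  classical
  set σ := Equiv.swap i j with hσ
  apply Finset.card_bij' (fun k _ => k ∘ σ) (fun k _ => k ∘ σ)
  · intro k hk
    simp only [mem_filter, mem_univ, true_and] at hk ⊢
    intro l hl
    have h1 : σ i = j := Equiv.swap_apply_left i j
    have h2 : σ l ≠ j := fun h => hl (σ.injective (h.trans h1.symm))
    simpa [Function.comp, h1] using hk (σ l) h2
  · intro k hk
    simp only [mem_filter, mem_univ, true_and] at hk ⊢
    intro l hl
    have h1 : σ j = i := Equiv.swap_apply_right i j
    have h2 : σ l ≠ i := fun h => hl (σ.injective (h.trans h1.symm))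
    simpa [Function.comp, h1] using hk (σ l) h2
  · intro k _
    funext l
    simp [Function.comp, σ, Equiv.swap_apply_self]
  · intro k _
    funext l
    simp [Function.comp, σ, Equiv.swap_apply_self]

open Classical in
set_option maxHeartbeats 1600000 in
lemma main_counting (i : Fin N) :
    N * (univ.filter (fun k : Fin N → Fin m => ∀ l, l ≠ i → k i < k l)).card ≤ m ^ N ∧
    2 * m ^ N ≤
      2 * (N * (univ.filter (fun k : Fin N → Fin m => ∀ l, l ≠ i → k i < k l)).card)
        + N ^ 2 * m ^ (N - 1) := by
  classical
  set c := (univ.filter (fun k : Fin N → Fin m => ∀ l, l ≠ i → k i < k l)).card with hc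
  set A : Fin N → Finset (Fin N → Fin m) :=
    fun j => univ.filter (fun k => ∀ l, l ≠ j → k j < k l) with hA
  have hdisj : ∀ j ∈ (univ : Finset (Fin N)), ∀ j' ∈ (univ : Finset (Fin N)),
      j ≠ j' → Disjoint (A j) (A j') := by
    intro j _ j' _ hjj'
    rw [Finset.disjoint_left]
    intro k hk hk'
    simp only [hA, mem_filter, mem_univ, true_and] at hk hk'
    exact lt_asymm (hk j' (Ne.symm hjj')) (hk' j hjj')
  have hsum : (univ.biUnion A).card = N * c := by
    rw [Finset.card_biUnion hdisj]
    have heq : ∀ j ∈ (univ : Finset (Fin N)), (A j).card = c :=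
      fun j _ => card_umin_eq i j
    rw [Finset.sum_congr rfl heq, Finset.sum_const, card_univ, Fintype.card_fin,
      smul_eq_mul]
  have hcardU : (univ : Finset (Fin N → Fin m)).card = m ^ N := by
    rw [card_univ, Fintype.card_fun, Fintype.card_fin, Fintype.card_fin]
  constructor
  · calc N * c = (univ.biUnion A).card := hsum.symm
      _ ≤ (univ : Finset (Fin N → Fin m)).card := Finset.card_le_card (subset_univ _)
      _ = m ^ N := hcardU
  · set P : Finset (Fin N × Fin N) := univ.filter (fun p => p.1 < p.2) with hP
    have hPcard : 2 * P.card ≤ N ^ 2 := by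
      have himg : (P.image Prod.swap).card = P.card :=
        Finset.card_image_of_injective _ Prod.swap_injective
      have hd : Disjoint P (P.image Prod.swap) := by
        rw [Finset.disjoint_left]
        intro p hp hp'
        obtain ⟨q, hq, hqp⟩ := Finset.mem_image.mp hp'
        have h1 : p.1 < p.2 := (mem_filter.mp hp).2
        have h2 : q.1 < q.2 := (mem_filter.mp hq).2
        rw [← hqp] at h1
        exact lt_asymm h1 h2
      calc 2 * P.card = P.card + (P.image Prod.swap).card := by rw [two_mul, himg]
        _ = (P ∪ P.image Prod.swap).card := (Finset.card_union_of_disjoint hd).symm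
        _ ≤ (univ : Finset (Fin N × Fin N)).card := Finset.card_le_card (subset_univ _)
        _ = N ^ 2 := by simp [sq]
    have hInj : univ.filter (fun k : Fin N → Fin m => Function.Injective k)
        ⊆ univ.biUnion A := by
      intro k hk
      have hkInj : Function.Injective k := (mem_filter.mp hk).2
      obtain ⟨j, _, hj⟩ := Finset.exists_min_image univ k ⟨i, mem_univ i⟩
      rw [Finset.mem_biUnion]
      refine ⟨j, mem_univ j, ?_⟩
      rw [hA, mem_filter]
      refine ⟨mem_univ _, fun l hl => ?_⟩
      exact lt_of_le_of_ne (hj l (mem_univ l)) (fun h => hl (hkInj h).symm)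
    have hcover : (univ : Finset (Fin N → Fin m)) ⊆
        (univ.biUnion A) ∪ (P.biUnion (fun p => univ.filter (fun k : Fin N → Fin m => k p.1 = k p.2))) := by
      intro k _
      by_cases hkInj : Function.Injective k
      · exact Finset.mem_union_left _ (hInj (mem_filter.mpr ⟨mem_univ _, hkInj⟩))
      · apply Finset.mem_union_right
        obtain ⟨a, b, hab, hne⟩ := Function.not_injective_iff.mp hkInj
        rw [Finset.mem_biUnion]
        rcases lt_or_gt_of_ne hne with h | h
        · exact ⟨(a, b), mem_filter.mpr ⟨mem_univ _, h⟩, mem_filter.mpr ⟨mem_univ _, hab⟩⟩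
        · exact ⟨(b, a), mem_filter.mpr ⟨mem_univ _, h⟩,
            mem_filter.mpr ⟨mem_univ _, hab.symm⟩⟩
    have hPairs : (P.biUnion (fun p => univ.filter (fun k : Fin N → Fin m => k p.1 = k p.2))).card
        ≤ P.card * m ^ (N - 1) := by
      calc (P.biUnion (fun p => univ.filter (fun k : Fin N → Fin m => k p.1 = k p.2))).card
          ≤ ∑ p ∈ P, (univ.filter (fun k : Fin N → Fin m => k p.1 = k p.2)).card :=
            Finset.card_biUnion_le
        _ ≤ ∑ _p ∈ P, m ^ (N - 1) := by
            refine Finset.sum_le_sum fun p hp => ?_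
            exact card_eq_coords_le p.1 p.2 (ne_of_lt (mem_filter.mp hp).2)
        _ = P.card * m ^ (N - 1) := by rw [Finset.sum_const, smul_eq_mul]
    have hmain : m ^ N ≤ N * c + P.card * m ^ (N - 1) := by
      calc m ^ N = (univ : Finset (Fin N → Fin m)).card := hcardU.symm
        _ ≤ ((univ.biUnion A) ∪
              (P.biUnion (fun p => univ.filter (fun k : Fin N → Fin m => k p.1 = k p.2)))).card :=
            Finset.card_le_card hcover
        _ ≤ (univ.biUnion A).card
              + (P.biUnion (fun p => univ.filter (fun k : Fin N → Fin m => k p.1 = k p.2))).card :=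
            Finset.card_union_le _ _
        _ ≤ N * c + P.card * m ^ (N - 1) := by
            rw [hsum]
            exact Nat.add_le_add_left hPairs _
    calc 2 * m ^ N ≤ 2 * (N * c + P.card * m ^ (N - 1)) :=
          Nat.mul_le_mul_left _ hmain
      _ = 2 * (N * c) + 2 * P.card * m ^ (N - 1) := by ring
      _ ≤ 2 * (N * c) + N ^ 2 * m ^ (N - 1) :=
          Nat.add_le_add_left (Nat.mul_le_mul_right _ hPcard) _

end aux

/-- Quantitative version of Claim 2: for `N` i.i.d. values uniform in `Fin m`,
the probability that index `i` is the unique minimizer is between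
`(1 - N²/(2m))/N` and `1/N`. -/
theorem unique_min_probability_bounds (N m : ℕ) [NeZero N] [NeZero m]
    (hN : 1 ≤ N) (hm : 1 ≤ m) (i : Fin N) :
    (1 - (N : ℝ) ^ 2 / (2 * m)) / N ≤
      ((PMF.uniformOfFintype (Fin N → Fin m)).toMeasure
        {k | ∀ l, l ≠ i → k i < k l}).toReal ∧
    ((PMF.uniformOfFintype (Fin N → Fin m)).toMeasure
        {k | ∀ l, l ≠ i → k i < k l}).toReal ≤ 1 / N := by
  classical
  set S : Set (Fin N → Fin m) := {k | ∀ l, l ≠ i → k i < k l} with hS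
  set c : ℕ := (univ.filter (fun k : Fin N → Fin m => ∀ l, l ≠ i → k i < k l)).card with hc
  have hSeq : S = ↑(univ.filter (fun k : Fin N → Fin m => ∀ l, l ≠ i → k i < k l)) := by
    ext k
    simp [hS]
  have hScard : Nat.card S = c := by
    rw [Nat.card_coe_set_eq, hSeq, Set.ncard_coe_finset, hc]
  have hSc2 : ∀ (inst : Fintype ↑S), @Fintype.card ↑S inst = c := fun inst =>
    (@Nat.card_eq_fintype_card _ inst).symm.trans hScard
  have hmeas : ((PMF.uniformOfFintype (Fin N → Fin m)).toMeasure S).toReal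
      = (c : ℝ) / (m : ℝ) ^ N := by
    rw [PMF.toMeasure_uniformOfFintype_apply _ S.to_countable.measurableSet,
      ENNReal.toReal_div, hSc2]
    rw [Fintype.card_fun, Fintype.card_fin, Fintype.card_fin]
    rw [ENNReal.toReal_natCast, ENNReal.toReal_natCast]
    norm_cast
  obtain ⟨h2, h3⟩ := main_counting (m := m) i
  rw [← hc] at h2 h3
  have hmpos : (0:ℝ) < (m:ℝ) := by exact_mod_cast hm
  have hNpos : (0:ℝ) < (N:ℝ) := by exact_mod_cast hN
  have hmNpos : (0:ℝ) < ((m:ℝ) ^ N) := by positivity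
  have hN1 : N - 1 + 1 = N := Nat.succ_pred_eq_of_pos hN
  have hpow : (m:ℝ) ^ N = (m:ℝ) ^ (N - 1) * m := by
    conv_lhs => rw [← hN1]
    rw [pow_succ]
  have h2' : (N:ℝ) * c ≤ (m:ℝ) ^ N := by exact_mod_cast h2
  have h3' : 2 * (m:ℝ) ^ N ≤ 2 * ((N:ℝ) * c) + (N:ℝ) ^ 2 * (m:ℝ) ^ (N - 1) := by
    exact_mod_cast h3
  rw [hmeas]
  constructor
  · rw [div_le_div_iff₀ hNpos hmNpos]
    have hkey : (1 - (N:ℝ)^2/(2*m)) * (m:ℝ)^N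
        = (m:ℝ)^N - (N:ℝ)^2 * (m:ℝ)^(N-1)/2 := by
      rw [hpow]
      field_simp
    rw [hkey]
    linarith
  · rw [div_le_div_iff₀ hmNpos hNpos]
    linarith
end

section
/- Fix a natural number n ≥ 2 and a subset S of Fin n with |S| = s, where 1 ≤ s ≤ n/2. Suppose each agent u ∈ Fin n ∖ S independently picks a target V_u uniformly at random in Fin n, and let T = S ∪ { u ∉ S : V_u ∈ S }. Then the probability that |T| ≥ s + s/4 is at least 1 − exp(−s/16). -/
open MeasureTheory Finset

private lemma exp_half_bound : Real.exp (-(1/2) : ℝ) ≤ 5/8 := by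
  have h1 : Real.exp (1/2) * Real.exp (1/2) = Real.exp 1 := by
    rw [← Real.exp_add]; norm_num
  have h2 := Real.exp_one_gt_d9
  have h3 := Real.exp_pos (1/2 : ℝ)
  have h4 : (8:ℝ)/5 ≤ Real.exp (1/2) := by nlinarith
  rw [Real.exp_neg]
  rw [inv_le_comm₀ h3 (by norm_num)]  -- might be wrong name
  linarith

/-- With-high-probability one-round growth of the pull-based broadcast in the
Find-Min phase: `S` is the set of informed agents (`|S| = s`, `1 ≤ s ≤ n/2`);
every uninformed agent `u ∉ S` independently pulls from a uniformly random
agent `V u` and becomes informed iff `V u ∈ S`. With probability at least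
`1 - exp(-s/16)`, the number of informed agents after the round is at least
`s + s/4`. -/
theorem pull_broadcast_whp_growth (n : ℕ) [NeZero n] (hn : 2 ≤ n)
    (S : Finset (Fin n)) (s : ℕ) (hcard : S.card = s) (hs : 1 ≤ s)
    (hs2 : (s : ℝ) ≤ n / 2) :
    1 - Real.exp (-(s : ℝ) / 16) ≤
      ((PMF.uniformOfFintype ({u : Fin n // u ∉ S} → Fin n)).toMeasure
        {V | (s : ℝ) + s / 4 ≤
          ((S ∪ (Finset.univ.filter fun u : {u : Fin n // u ∉ S} =>
              V u ∈ S).image Subtype.val).card : ℝ)}).toReal := by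
  classical
  set ι := {u : Fin n // u ∉ S} with hι
  set X : (ι → Fin n) → ℕ := fun V => (univ.filter fun u => V u ∈ S).card with hX
  have hn0 : (0:ℝ) < n := by positivity
  have hsn : s ≤ n := by
    rw [← hcard]; simpa using S.card_le_univ
  set m : ℕ := n - s with hm
  have hmcard : Fintype.card ι = m := by
    simp [hι, hm, Fintype.card_subtype_compl, hcard]
  have hmr : (m:ℝ) = (n:ℝ) - s := by
    rw [hm]; push_cast [hsn]; ring
  -- the union card
  have hcardT : ∀ V : ι → Fin n,
      (S ∪ (univ.filter fun u : ι => V u ∈ S).image Subtype.val).card = s + X V := by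
    intro V
    rw [Finset.card_union_of_disjoint, hcard,
      Finset.card_image_of_injective _ Subtype.val_injective]
    rw [Finset.disjoint_left]
    rintro a haS ha
    obtain ⟨u, -, rfl⟩ := Finset.mem_image.mp ha
    exact u.2 haS
  -- the event as a finset
  set Good : Finset (ι → Fin n) := univ.filter fun V => (s:ℝ)/4 ≤ X V with hGood
  have hsetG : {V : ι → Fin n | (s : ℝ) + s / 4 ≤
      ((S ∪ (Finset.univ.filter fun u : ι => V u ∈ S).image Subtype.val).card : ℝ)}
      = ↑Good := by
    ext V
    simp only [Set.mem_setOf_eq, hGood, Finset.coe_filter, Finset.mem_univ, true_and,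
      hcardT V]
    push_cast
    constructor <;> intro h <;> linarith
  set Bad : Finset (ι → Fin n) := univ.filter fun V => ¬ ((s:ℝ)/4 ≤ X V) with hBad
  -- measure computation
  have hmeas : ((PMF.uniformOfFintype (ι → Fin n)).toMeasure
      {V : ι → Fin n | (s : ℝ) + s / 4 ≤
      ((S ∪ (Finset.univ.filter fun u : ι => V u ∈ S).image Subtype.val).card : ℝ)}).toReal
      = (Good.card : ℝ) / (n:ℝ)^m := by
    rw [hsetG, PMF.toMeasure_uniformOfFintype_apply (s := (Good : Set (ι → Fin n)))
      (Good : Set (ι → Fin n)).to_countable.measurableSet, ENNReal.toReal_div]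
    simp [Fintype.card_fun, hmcard]
  rw [hmeas]
  -- key Chernoff estimate
  have hBadGood : (Good.card : ℝ) = (n:ℝ)^m - Bad.card := by
    have := Finset.card_filter_add_card_filter_not
      (s := (univ : Finset (ι → Fin n))) (p := fun V => (s:ℝ)/4 ≤ X V)
    have hcu : (univ : Finset (ι → Fin n)).card = n ^ m := by
      simp [Fintype.card_fun, hmcard]
    rw [hcu] at this
    have h2 : ((Good.card : ℝ)) + Bad.card = (n:ℝ) ^ m := by
      exact_mod_cast congrArg (Nat.cast : ℕ → ℝ) this
    linarith
  -- MGF identity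
  set e : ℝ := Real.exp (-(1/2)) with he
  have he0 : 0 < e := Real.exp_pos _
  have he1 : e ≤ 5/8 := exp_half_bound
  have hMGF : ∑ V : ι → Fin n, Real.exp (-(X V : ℝ)/2)
      = ((s:ℝ) * e + ((n:ℝ) - s)) ^ m := by
    have h1 : ∀ V : ι → Fin n, Real.exp (-(X V : ℝ)/2)
        = ∏ u : ι, (if V u ∈ S then e else 1) := by
      intro V
      have hsum : (-(X V : ℝ)/2) = ∑ u : ι, (if V u ∈ S then (-(1/2):ℝ) else 0) := by
        rw [Finset.sum_ite, Finset.sum_const, Finset.sum_const]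
        simp only [hX, smul_eq_mul, mul_zero, add_zero, nsmul_eq_mul]
        ring
      rw [hsum, Real.exp_sum]
      refine Finset.prod_congr rfl fun u _ => ?_
      by_cases h : V u ∈ S <;> simp [h, he]
    simp_rw [h1]
    rw [← Fintype.piFinset_univ,
      Finset.sum_prod_piFinset univ (fun (_ : ι) (j : Fin n) => if j ∈ S then e else 1),
      Finset.prod_const, Finset.card_univ, hmcard]
    congr 1
    have hfS : (univ.filter fun j => j ∈ S) = S := by
      ext j; simp
    have hfS' : ((univ.filter fun j : Fin n => j ∉ S).card : ℝ) = (n:ℝ) - s := by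
      have h9 : (univ.filter fun j : Fin n => j ∉ S).card = n - s := by
        rw [Finset.filter_not, Finset.card_sdiff_of_subset (Finset.subset_univ _), hfS, hcard,
          Finset.card_univ, Fintype.card_fin]
      rw [h9, Nat.cast_sub hsn]
    rw [Finset.sum_ite]
    simp only [Finset.sum_const, nsmul_eq_mul, mul_one, hfS, hcard]
    rw [hfS']
  -- Chernoff counting bound
  have hpow : (0:ℝ) < (n:ℝ)^m := by positivity
  have hns : (s:ℝ) ≤ n := by exact_mod_cast hsn
  have hsnn : (0:ℝ) ≤ s := by positivity
  have hBadBound : (Bad.card : ℝ) ≤ (n:ℝ)^m * Real.exp (-(s:ℝ)/16) := by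
    have step1 : (Bad.card : ℝ)
        ≤ Real.exp ((s:ℝ)/8) * ∑ V : ι → Fin n, Real.exp (-(X V : ℝ)/2) := by
      rw [Finset.mul_sum]
      calc (Bad.card : ℝ) = ∑ _V ∈ Bad, (1:ℝ) := by simp
        _ ≤ ∑ V ∈ Bad, Real.exp ((s:ℝ)/8) * Real.exp (-(X V:ℝ)/2) := by
            refine Finset.sum_le_sum fun V hV => ?_
            have hV' : (X V : ℝ) < (s:ℝ)/4 := by
              have h := (Finset.mem_filter.mp hV).2
              exact not_le.mp h
            rw [← Real.exp_add]
            exact Real.one_le_exp (by linarith)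
        _ ≤ ∑ V : ι → Fin n, Real.exp ((s:ℝ)/8) * Real.exp (-(X V:ℝ)/2) :=
            Finset.sum_le_sum_of_subset_of_nonneg (Finset.subset_univ _)
              (fun V _ _ => by positivity)
    rw [hMGF] at step1
    have hbase_nonneg : (0:ℝ) ≤ (s:ℝ)*e + ((n:ℝ)-s) := by nlinarith [he0.le]
    have hexp1 : (s:ℝ)*e + ((n:ℝ)-s) ≤ (n:ℝ) * Real.exp (-((s:ℝ)*(1-e))/n) := by
      have h := Real.add_one_le_exp (-((s:ℝ)*(1-e))/(n:ℝ))
      calc (s:ℝ)*e + ((n:ℝ)-s) = (n:ℝ) * (-((s:ℝ)*(1-e))/n + 1) := by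
            field_simp
            ring
        _ ≤ (n:ℝ) * Real.exp (-((s:ℝ)*(1-e))/n) :=
            mul_le_mul_of_nonneg_left h hn0.le
    have hpowle : ((s:ℝ)*e + ((n:ℝ)-s))^m ≤ ((n:ℝ) * Real.exp (-((s:ℝ)*(1-e))/n))^m :=
      pow_le_pow_left₀ hbase_nonneg hexp1 m
    rw [mul_pow, ← Real.exp_nat_mul] at hpowle
    have hexpineq : (s:ℝ)/8 + (m:ℝ) * (-((s:ℝ)*(1-e))/n) ≤ -(s:ℝ)/16 := by
      have hmge : (n:ℝ)/2 ≤ (m:ℝ) := by rw [hmr]; linarith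
      have hce : (3:ℝ)/8 ≤ 1 - e := by linarith
      have h10 : (n:ℝ)/2 * (3/8) ≤ (m:ℝ)*(1-e) :=
        mul_le_mul hmge hce (by norm_num) (by linarith)
      have key : 3*(s:ℝ)/16 ≤ (m:ℝ)*((s:ℝ)*(1-e))/n := by
        rw [le_div_iff₀ hn0]
        nlinarith
      have hrw : (m:ℝ) * (-((s:ℝ)*(1-e))/n) = -((m:ℝ)*((s:ℝ)*(1-e))/n) := by ring
      rw [hrw]
      linarith
    calc (Bad.card : ℝ)
        ≤ Real.exp ((s:ℝ)/8) * ((s:ℝ)*e + ((n:ℝ)-s))^m := step1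
      _ ≤ Real.exp ((s:ℝ)/8) * ((n:ℝ)^m * Real.exp ((m:ℝ) * (-((s:ℝ)*(1-e))/n))) :=
          mul_le_mul_of_nonneg_left hpowle (Real.exp_pos _).le
      _ = (n:ℝ)^m * Real.exp ((s:ℝ)/8 + (m:ℝ) * (-((s:ℝ)*(1-e))/n)) := by
          rw [Real.exp_add]; ring
      _ ≤ (n:ℝ)^m * Real.exp (-(s:ℝ)/16) :=
          mul_le_mul_of_nonneg_left (Real.exp_le_exp.mpr hexpineq) hpow.le
  rw [hBadGood, sub_div, div_self hpow.ne']
  have hfin : (Bad.card:ℝ)/(n:ℝ)^m ≤ Real.exp (-(s:ℝ)/16) := by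
    rw [div_le_iff₀ hpow]
    linarith [hBadBound]
  linarith
end
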